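/- Let G be a finite group with 1 ∈ CD(G). If H ∈ CD(G) and H ≠ G, then the index |G : H| is divisible by at least two distinct primes; consequently, H is not a maximal subgroup of G. -/

import Mathlib

open Pointwise

/-- The Chermak-Delgado measure of a subgroup: `m_G(H) = |H| * |C_G(H)|`. -/
noncomputable def cdMeasure {G : Type*} [Group G] (H : Subgroup G) : Nat :=
  Nat.card H * Nat.card (Subgroup.centralizer (H : Set G))

/-- The Chermak-Delgado lattice of `G`: the subgroups of maximal Chermak-Delgado measure. -/
def CD (G : Type*) [Group G] : Set (Subgroup G) :=
  {H | ∀ K : Subgroup G, cdMeasure K ≤ cdMeasure H}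

set_option linter.unusedSectionVars false
set_option linter.unusedVariables false
set_option maxHeartbeats 1000000

namespace CDAux

variable {G : Type*} [Group G] [Fintype G]



lemma card_mul_card_le (X Y : Subgroup G) :
    Nat.card X * Nat.card Y ≤ Nat.card ↥(X ⊔ Y) * Nat.card ↥(X ⊓ Y) := by
  have hXY : Nat.card ↥(X ⊓ Y) * Y.relIndex X = Nat.card X := by
    have h := Subgroup.card_mul_index (Y.subgroupOf X)
    rwa [show Nat.card ↥(Y.subgroupOf X) = Nat.card ↥(X ⊓ Y) by
      rw [← Subgroup.inf_subgroupOf_left]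
      exact Nat.card_congr (Subgroup.subgroupOfEquivOfLe inf_le_left).toEquiv] at h
  have hS : Nat.card Y * Y.relIndex (X ⊔ Y) = Nat.card ↥(X ⊔ Y) := by
    have h := Subgroup.card_mul_index (Y.subgroupOf (X ⊔ Y))
    rwa [show Nat.card ↥(Y.subgroupOf (X ⊔ Y)) = Nat.card Y from
      Nat.card_congr (Subgroup.subgroupOfEquivOfLe le_sup_right).toEquiv] at h
  have hne : Y.relIndex (X ⊔ Y) ≠ 0 := Subgroup.index_ne_zero_of_finite
  have hle : Y.relIndex X ≤ Y.relIndex (X ⊔ Y) :=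
    Subgroup.relIndex_le_of_le_right le_sup_left hne
  calc Nat.card X * Nat.card Y
      = (Nat.card ↥(X ⊓ Y) * Y.relIndex X) * Nat.card Y := by rw [hXY]
    _ ≤ (Nat.card ↥(X ⊓ Y) * Y.relIndex (X ⊔ Y)) * Nat.card Y := by
        exact Nat.mul_le_mul_right _ (Nat.mul_le_mul_left _ hle)
    _ = Nat.card ↥(X ⊓ Y) * (Nat.card Y * Y.relIndex (X ⊔ Y)) := by ring
    _ = Nat.card ↥(X ⊔ Y) * Nat.card ↥(X ⊓ Y) := by rw [hS]; ring

lemma centralizer_sup_eq (X Y : Subgroup G) :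
    Subgroup.centralizer ↑(X ⊔ Y) =
      Subgroup.centralizer (X : Set G) ⊓ Subgroup.centralizer (Y : Set G) := by
  refine le_antisymm (le_inf ?_ ?_) ?_
  · exact Subgroup.centralizer_le (SetLike.coe_subset_coe.mpr le_sup_left)
  · exact Subgroup.centralizer_le (SetLike.coe_subset_coe.mpr le_sup_right)
  · rintro g ⟨h1, h2⟩
    have hX : X ≤ Subgroup.centralizer {g} :=
      fun x hx => Subgroup.mem_centralizer_singleton_iff.mpr (h1 x hx)
    have hY : Y ≤ Subgroup.centralizer {g} :=
      fun y hy => Subgroup.mem_centralizer_singleton_iff.mpr (h2 y hy)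
    exact Subgroup.mem_centralizer_iff.mpr fun h hh =>
      Subgroup.mem_centralizer_singleton_iff.mp ((sup_le hX hY) hh)

lemma cdMeasure_mul_le (X Y : Subgroup G) :
    cdMeasure X * cdMeasure Y ≤ cdMeasure (X ⊓ Y) * cdMeasure (X ⊔ Y) := by
  have h1 := card_mul_card_le X Y
  have h2 := card_mul_card_le (Subgroup.centralizer (X : Set G))
      (Subgroup.centralizer (Y : Set G))
  have h3 : Nat.card ↥(Subgroup.centralizer (X : Set G) ⊔ Subgroup.centralizer (Y : Set G)) ≤
      Nat.card ↥(Subgroup.centralizer ((X ⊓ Y : Subgroup G) : Set G)) := by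
    refine Subgroup.card_le_of_le (sup_le ?_ ?_)
    · exact Subgroup.centralizer_le (SetLike.coe_subset_coe.mpr inf_le_left)
    · exact Subgroup.centralizer_le (SetLike.coe_subset_coe.mpr inf_le_right)
  have h4 : Nat.card ↥(Subgroup.centralizer (X : Set G) ⊓ Subgroup.centralizer (Y : Set G)) =
      Nat.card ↥(Subgroup.centralizer ((X ⊔ Y : Subgroup G) : Set G)) := by
    rw [centralizer_sup_eq]
  unfold cdMeasure
  calc Nat.card X * Nat.card ↥(Subgroup.centralizer (X : Set G)) *
        (Nat.card Y * Nat.card ↥(Subgroup.centralizer (Y : Set G)))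
      = (Nat.card X * Nat.card Y) *
        (Nat.card ↥(Subgroup.centralizer (X : Set G)) *
          Nat.card ↥(Subgroup.centralizer (Y : Set G))) := by ring
    _ ≤ (Nat.card ↥(X ⊔ Y) * Nat.card ↥(X ⊓ Y)) *
        (Nat.card ↥(Subgroup.centralizer ((X ⊓ Y : Subgroup G) : Set G)) *
          Nat.card ↥(Subgroup.centralizer ((X ⊔ Y : Subgroup G) : Set G))) := by
        refine Nat.mul_le_mul h1 (h2.trans ?_)
        rw [h4]
        exact Nat.mul_le_mul_right _ h3
    _ = Nat.card ↥(X ⊓ Y) * Nat.card ↥(Subgroup.centralizer ((X ⊓ Y : Subgroup G) : Set G)) *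
        (Nat.card ↥(X ⊔ Y) * Nat.card ↥(Subgroup.centralizer ((X ⊔ Y : Subgroup G) : Set G))) := by
        ring



lemma centralizer_smul_set (a : MulAut G) (s : Set G) :
    Subgroup.centralizer (a • s) = a • Subgroup.centralizer s := by
  ext x
  rw [Subgroup.mem_pointwise_smul_iff_inv_smul_mem, Subgroup.mem_centralizer_iff,
    Subgroup.mem_centralizer_iff]
  constructor
  · intro hx h hh
    have h1 := hx (a • h) (Set.smul_mem_smul_set hh)
    have h2 := congrArg (⇑(a⁻¹ : MulAut G)) h1
    simpa [MulAut.smul_def, map_mul] using h2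
  · intro hx h hh
    rw [Set.mem_smul_set_iff_inv_smul_mem] at hh
    have h1 := hx _ hh
    have h2 := congrArg (⇑a) h1
    simpa [MulAut.smul_def, map_mul] using h2

lemma card_smul (a : MulAut G) (B : Subgroup G) : Nat.card ↥(a • B) = Nat.card B :=
  (Nat.card_congr (Subgroup.equivSMul a B).toEquiv).symm

lemma cdMeasure_smul (a : MulAut G) (B : Subgroup G) : cdMeasure (a • B) = cdMeasure B := by
  unfold cdMeasure
  rw [Subgroup.coe_pointwise_smul, centralizer_smul_set, card_smul, card_smul]

lemma mem_CD_smul (a : MulAut G) {B : Subgroup G} (hB : B ∈ CD G) : a • B ∈ CD G :=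
  fun K => (cdMeasure_smul a B) ▸ hB K

lemma mem_smul_conj {g x : G} {B : Subgroup G} :
    x ∈ MulAut.conj g • B ↔ g⁻¹ * x * g ∈ B := by
  rw [Subgroup.mem_pointwise_smul_iff_inv_smul_mem]
  simp [MulAut.smul_def, ← map_inv, MulAut.conj_apply, mul_assoc]

lemma conj_smul_le_of_mem {g : G} {B P : Subgroup G} (hg : g ∈ P) (hBP : B ≤ P) :
    MulAut.conj g • B ≤ P := by
  intro x hx
  rw [mem_smul_conj] at hx
  have : x = g * (g⁻¹ * x * g) * g⁻¹ := by group
  rw [this]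
  exact P.mul_mem (P.mul_mem hg (hBP hx)) (P.inv_mem hg)

lemma conj_smul_eq_of_mem {g : G} {H : Subgroup G} (hg : g ∈ H) :
    MulAut.conj g • H = H := by
  refine le_antisymm (conj_smul_le_of_mem hg le_rfl) (fun x hx => ?_)
  rw [mem_smul_conj]
  exact H.mul_mem (H.mul_mem (H.inv_mem hg) hx) hg

lemma fixed_pt {q : ℕ} [Fact q.Prime] (P B : Subgroup G) (hP : IsPGroup q P)
    (hinv : ∀ x ∈ P, ∀ b ∈ B, x * b * x⁻¹ ∈ B)
    (hq : q ∣ Nat.card B) :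
    ∃ b ∈ B, b ≠ 1 ∧ ∀ x ∈ P, x * b = b * x := by
  letI : MulAction (ConjAct ↥P) ↥B :=
    { smul := fun g b => ⟨((ConjAct.ofConjAct g : ↥P) : G) * b * ((ConjAct.ofConjAct g : ↥P) : G)⁻¹,
        hinv _ (ConjAct.ofConjAct g).2 _ b.2⟩
      one_smul := fun b => Subtype.ext (by
        show ((ConjAct.ofConjAct (1 : ConjAct ↥P) : ↥P) : G) * b *
            ((ConjAct.ofConjAct (1 : ConjAct ↥P) : ↥P) : G)⁻¹ = (b : G)
        simp)
      mul_smul := fun g h b => Subtype.ext (by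
        show ((ConjAct.ofConjAct (g * h) : ↥P) : G) * b *
            ((ConjAct.ofConjAct (g * h) : ↥P) : G)⁻¹
          = ((ConjAct.ofConjAct g : ↥P) : G) *
              (((ConjAct.ofConjAct h : ↥P) : G) * b * ((ConjAct.ofConjAct h : ↥P) : G)⁻¹) *
              ((ConjAct.ofConjAct g : ↥P) : G)⁻¹
        simp [mul_assoc]) }
  have hcoe : ∀ (g : ConjAct ↥P) (b : ↥B),
      ((g • b : ↥B) : G) =
        ((ConjAct.ofConjAct g : ↥P) : G) * b * ((ConjAct.ofConjAct g : ↥P) : G)⁻¹ :=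
    fun _ _ => rfl
  have hPc : IsPGroup q (ConjAct ↥P) := hP.of_equiv ConjAct.toConjAct
  have h1 : (1 : ↥B) ∈ MulAction.fixedPoints (ConjAct ↥P) ↥B := by
    intro g
    ext
    rw [hcoe]
    simp
  obtain ⟨b, hbfix, hb1⟩ :=
    hPc.exists_fixed_point_of_prime_dvd_card_of_fixed_point (α := ↥B) (by simpa using hq) h1
  refine ⟨(b : G), b.2, fun h => hb1 (Subtype.ext h.symm), fun x hx => ?_⟩
  have h2 := hbfix (ConjAct.toConjAct (⟨x, hx⟩ : ↥P))
  have h3 := congrArg Subtype.val h2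
  rw [hcoe] at h3
  simp only [ConjAct.ofConjAct_toConjAct] at h3
  exact mul_inv_eq_iff_eq_mul.mp h3



-- placeholders for already-proven lemmas (tested separately)

lemma cdMeasure_bot : cdMeasure (⊥ : Subgroup G) = Nat.card G := by
  unfold cdMeasure
  rw [Subgroup.card_bot, one_mul]
  have h : Subgroup.centralizer ((⊥ : Subgroup G) : Set G) = ⊤ := by
    rw [Subgroup.coe_bot]
    exact Subgroup.centralizer_eq_top_iff_subset.mpr
      (Set.singleton_subset_iff.mpr (Subgroup.center G).one_mem)
  rw [h, Subgroup.card_top]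

lemma hmax (hbot : (⊥ : Subgroup G) ∈ CD G) : ∀ K : Subgroup G, cdMeasure K ≤ Nat.card G :=
  fun K => cdMeasure_bot (G := G) ▸ hbot K

lemma center_triv (hbot : (⊥ : Subgroup G) ∈ CD G) : ∀ z : G, (∀ x : G, x * z = z * x) → z = 1 := by
  intro z hz
  have h1 : cdMeasure (⊤ : Subgroup G) ≤ Nat.card G := hmax hbot ⊤
  unfold cdMeasure at h1
  rw [Subgroup.card_top] at h1
  have hpos : 0 < Nat.card G := Nat.card_pos
  have h2 : Nat.card (Subgroup.centralizer (((⊤ : Subgroup G)) : Set G)) ≤ 1 := by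
    by_contra hc
    push_neg at hc
    have := Nat.mul_le_mul_left (Nat.card G) hc
    omega
  have h3 : Subgroup.centralizer (((⊤ : Subgroup G)) : Set G) = ⊥ :=
    Subgroup.eq_bot_of_card_le _ h2
  have h4 : z ∈ Subgroup.centralizer (((⊤ : Subgroup G)) : Set G) :=
    Subgroup.mem_centralizer_iff.mpr (fun h _ => hz h)
  rw [h3] at h4
  exact Subgroup.mem_bot.mp h4

lemma cd_eq (hbot : (⊥ : Subgroup G) ∈ CD G) {X : Subgroup G} (hX : X ∈ CD G) : cdMeasure X = Nat.card G :=
  le_antisymm (hmax hbot X) (cdMeasure_bot (G := G) ▸ hX ⊥)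

lemma cent_card (hbot : (⊥ : Subgroup G) ∈ CD G) {X : Subgroup G} (hX : X ∈ CD G) :
    Nat.card X * Nat.card (Subgroup.centralizer (X : Set G)) = Nat.card G :=
  cd_eq hbot hX

lemma sup_mem (hbot : (⊥ : Subgroup G) ∈ CD G) {X Y : Subgroup G} (hX : X ∈ CD G) (hY : Y ∈ CD G) : X ⊔ Y ∈ CD G := by
  have h := cdMeasure_mul_le X Y
  rw [cd_eq hbot hX, cd_eq hbot hY] at h
  have h2 : Nat.card G * Nat.card G ≤ Nat.card G * cdMeasure (X ⊔ Y) :=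
    h.trans (Nat.mul_le_mul_right _ (hmax hbot _))
  have h3 : Nat.card G ≤ cdMeasure (X ⊔ Y) := Nat.le_of_mul_le_mul_left h2 Nat.card_pos
  intro K
  exact (hmax hbot K).trans h3

lemma inf_mem (hbot : (⊥ : Subgroup G) ∈ CD G) {X Y : Subgroup G} (hX : X ∈ CD G) (hY : Y ∈ CD G) : X ⊓ Y ∈ CD G := by
  have h := cdMeasure_mul_le X Y
  rw [cd_eq hbot hX, cd_eq hbot hY] at h
  have h2 : Nat.card G * Nat.card G ≤ cdMeasure (X ⊓ Y) * Nat.card G :=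
    h.trans (Nat.mul_le_mul_left _ (hmax hbot _))
  have h3 : Nat.card G ≤ cdMeasure (X ⊓ Y) := Nat.le_of_mul_le_mul_right h2 Nat.card_pos
  intro K
  exact (hmax hbot K).trans h3

lemma le_cent_cent (X : Subgroup G) :
    X ≤ Subgroup.centralizer ↑(Subgroup.centralizer (X : Set G)) :=
  fun x hx => Subgroup.mem_centralizer_iff.mpr (fun c hc => (hc x hx).symm)

lemma cent_mem (hbot : (⊥ : Subgroup G) ∈ CD G) {X : Subgroup G} (hX : X ∈ CD G) :
    Subgroup.centralizer (X : Set G) ∈ CD G := by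
  have h1 : Nat.card X ≤
      Nat.card (Subgroup.centralizer ((Subgroup.centralizer (X : Set G) : Subgroup G) : Set G)) :=
    Subgroup.card_le_of_le (le_cent_cent X)
  have h2 : Nat.card G ≤ cdMeasure (Subgroup.centralizer (X : Set G)) := by
    calc Nat.card G = Nat.card X * Nat.card (Subgroup.centralizer (X : Set G)) :=
          (cent_card hbot hX).symm
      _ ≤ Nat.card (Subgroup.centralizer ((Subgroup.centralizer (X : Set G) : Subgroup G) : Set G))
            * Nat.card (Subgroup.centralizer (X : Set G)) :=
          Nat.mul_le_mul_right _ h1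
      _ = cdMeasure (Subgroup.centralizer (X : Set G)) := by unfold cdMeasure; ring
  intro K
  exact (hmax hbot K).trans h2

lemma no_pgroup (hbot : (⊥ : Subgroup G) ∈ CD G) {p : ℕ} (hp : p.Prime)
    {B0 : Subgroup G} (hB0 : B0 ∈ CD G) (hB0bot : B0 ≠ ⊥) (hpg0 : IsPGroup p ↥B0) : False := by
  haveI := Fact.mk hp
  classical
  set S : Set (Subgroup G) := {B | B ∈ CD G ∧ B ≠ ⊥ ∧ IsPGroup p ↥B} with hS
  obtain ⟨B, hBS, hBmax⟩ := Set.Finite.exists_maximalFor (fun B : Subgroup G => Nat.card B) S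
    (Set.toFinite S) ⟨B0, hB0, hB0bot, hpg0⟩
  obtain ⟨hB, hBbot, hpg⟩ := hBS
  obtain ⟨P, hBP⟩ := hpg.exists_le_sylow
  have hfix : ∀ g ∈ (P : Subgroup G), MulAut.conj g • B = B := by
    intro g hg
    have hJ : B ⊔ MulAut.conj g • B ∈ S := by
      refine ⟨sup_mem hbot hB (mem_CD_smul _ hB), ?_, ?_⟩
      · intro h
        exact hBbot (le_bot_iff.mp (h ▸ (le_sup_left : B ≤ B ⊔ MulAut.conj g • B)))
      · exact IsPGroup.to_le P.isPGroup' (sup_le hBP (conj_smul_le_of_mem hg hBP))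
    have h1 : Nat.card B = Nat.card ↥(B ⊔ MulAut.conj g • B) :=
      le_antisymm (Subgroup.card_le_of_le le_sup_left) (hBmax hJ (Subgroup.card_le_of_le le_sup_left))
    have h2 : B = B ⊔ MulAut.conj g • B :=
      Subgroup.eq_of_le_of_card_ge le_sup_left (le_of_eq h1.symm)
    have h3 : MulAut.conj g • B ≤ B := by
      conv_rhs => rw [h2]
      exact le_sup_right
    exact Subgroup.eq_of_le_of_card_ge h3 (le_of_eq (card_smul _ _).symm)
  have hinv : ∀ x ∈ (P : Subgroup G), ∀ b ∈ B, x * b * x⁻¹ ∈ B := by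
    intro x hx b hb
    rw [← hfix x hx, mem_smul_conj]
    have h : x⁻¹ * (x * b * x⁻¹) * x = b := by group
    rwa [h]
  have hdvd : p ∣ Nat.card B := by
    obtain ⟨n, hn⟩ := IsPGroup.iff_card.mp hpg
    rcases Nat.eq_zero_or_pos n with h0 | hpos
    · exact absurd (Subgroup.eq_bot_of_card_eq _ (by rw [hn, h0, pow_zero])) hBbot
    · rw [hn]; exact dvd_pow_self p hpos.ne'
  obtain ⟨z, hzB, hz1, hzcomm⟩ := fixed_pt (P : Subgroup G) B P.isPGroup' hinv hdvd
  set C := Subgroup.centralizer (B : Set G) with hC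
  have hBC : Nat.card B * Nat.card C = Nat.card G := cent_card hbot hB
  obtain ⟨t, ht⟩ := IsPGroup.iff_card.mp
    (IsPGroup.to_le P.isPGroup' (inf_le_right : C ⊓ (P : Subgroup G) ≤ P))
  obtain ⟨b, hb⟩ := IsPGroup.iff_card.mp hpg
  have hG0 : (Nat.card G) ≠ 0 := Nat.card_pos.ne'
  have hdvd2 : Nat.card ↥(C ⊓ (P : Subgroup G)) * Nat.card B ∣ Nat.card G := by
    rw [← hBC, mul_comm (Nat.card B)]
    exact mul_dvd_mul (Subgroup.card_dvd_of_le inf_le_left) dvd_rfl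
  have hPcard : Nat.card ↥(P : Subgroup G) = p ^ (Nat.card G).factorization p :=
    P.card_eq_multiplicity
  have hbound : Nat.card ↥(C ⊓ (P : Subgroup G)) * Nat.card B ≤ Nat.card ↥(P : Subgroup G) := by
    rw [ht, hb, ← pow_add] at hdvd2 ⊢
    rw [hPcard]
    exact Nat.pow_le_pow_right hp.pos ((Nat.Prime.pow_dvd_iff_le_factorization hp hG0).mp hdvd2)
  have hsup : Nat.card G ≤ Nat.card ↥(C ⊔ (P : Subgroup G)) := by
    have h1 := card_mul_card_le C (P : Subgroup G)
    have h2 : Nat.card G * Nat.card ↥(P : Subgroup G) ≤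
        Nat.card ↥(C ⊔ (P : Subgroup G)) * Nat.card ↥(P : Subgroup G) := by
      calc Nat.card G * Nat.card ↥(P : Subgroup G)
          = (Nat.card C * Nat.card ↥(P : Subgroup G)) * Nat.card B := by rw [← hBC]; ring
        _ ≤ (Nat.card ↥(C ⊔ (P : Subgroup G)) * Nat.card ↥(C ⊓ (P : Subgroup G))) * Nat.card B :=
            Nat.mul_le_mul_right _ h1
        _ = Nat.card ↥(C ⊔ (P : Subgroup G)) *
              (Nat.card ↥(C ⊓ (P : Subgroup G)) * Nat.card B) := by ring
        _ ≤ Nat.card ↥(C ⊔ (P : Subgroup G)) * Nat.card ↥(P : Subgroup G) :=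
            Nat.mul_le_mul_left _ hbound
    exact Nat.le_of_mul_le_mul_right h2 Nat.card_pos
  have hzC : C ⊔ (P : Subgroup G) ≤ Subgroup.centralizer {z} := by
    refine sup_le ?_ ?_
    · exact Subgroup.centralizer_le (Set.singleton_subset_iff.mpr hzB)
    · intro x hx
      exact Subgroup.mem_centralizer_singleton_iff.mpr (hzcomm x hx)
  have htop : ∀ x : G, x * z = z * x := by
    have hcard : Nat.card G ≤ Nat.card (Subgroup.centralizer {z}) :=
      hsup.trans (Subgroup.card_le_of_le hzC)
    have hle : Nat.card (Subgroup.centralizer {z} : Subgroup G) ≤ Nat.card G := by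
      rw [← Subgroup.card_top (G := G)]
      exact Subgroup.card_le_of_le le_top
    have heq : Subgroup.centralizer {z} = (⊤ : Subgroup G) :=
      Subgroup.eq_top_of_card_eq _ (le_antisymm hle hcard)
    intro x
    exact Subgroup.mem_centralizer_singleton_iff.mp (heq ▸ Subgroup.mem_top x)
  exact hz1 (center_triv hbot z htop)





end CDAux

open CDAux in
theorem stmt17 {G : Type*} [Group G] [Fintype G]
    (hbot : (⊥ : Subgroup G) ∈ CD G)
    (H : Subgroup G) (hH : H ∈ CD G) (hne : H ≠ ⊤) :
    (∃ p q : Nat, p.Prime ∧ q.Prime ∧ p ≠ q ∧ p ∣ H.index ∧ q ∣ H.index) ∧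
      ¬ IsCoatom H := by
  classical
  have hcent := center_triv hbot
  set K := Subgroup.centralizer (H : Set G) with hK
  have hHK : Nat.card H * Nat.card K = Nat.card G := cent_card hbot hH
  have hindex : H.index = Nat.card K := by
    have h1 : Nat.card H * H.index = Nat.card G := Subgroup.card_mul_index H
    exact Nat.eq_of_mul_eq_mul_left Nat.card_pos (by rw [h1, hHK])
  have hidx1 : H.index ≠ 1 := fun h => hne (Subgroup.index_eq_one.mp h)
  have hidx0 : H.index ≠ 0 := Subgroup.index_ne_zero_of_finite
  have hKCD : K ∈ CD G := cent_mem hbot hH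
  have hKbot : K ≠ ⊥ := by
    intro h
    apply hidx1
    rw [hindex, h, Subgroup.card_bot]
  have part1 : ∃ p q : Nat, p.Prime ∧ q.Prime ∧ p ≠ q ∧ p ∣ H.index ∧ q ∣ H.index := by
    by_contra hcon
    push_neg at hcon
    obtain ⟨p, hp, hpd⟩ := Nat.exists_prime_and_dvd hidx1
    have hall : ∀ d : ℕ, d.Prime → d ∣ H.index → d = p := by
      intro d hd hdd
      by_contra hne'
      exact (hcon p d hp hd (fun h => hne' h.symm) hpd) hdd
    have hpow : Nat.card K = p ^ (H.index).primeFactorsList.length := by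
      rw [← hindex]
      exact Nat.eq_prime_pow_of_unique_prime_dvd hidx0 (fun {d} hd hdd => hall d hd hdd)
    exact no_pgroup hbot hp hKCD hKbot (IsPGroup.of_card hpow)
  refine ⟨part1, ?_⟩
  intro hco
  obtain ⟨p, q, hp, hq, hpq, hpd, hqd⟩ := part1
  by_cases hKH : K ≤ H
  · -- case (ii) : C(H) ≤ H
    have hCz : ∀ z, z ∈ K → z ≠ 1 → Subgroup.centralizer {z} = H := by
      intro z hzK hz1
      have hle : H ≤ Subgroup.centralizer {z} := fun h hh =>
        Subgroup.mem_centralizer_singleton_iff.mpr (Subgroup.mem_centralizer_iff.mp hzK h hh)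
      have hne' : Subgroup.centralizer {z} ≠ ⊤ := by
        intro h
        refine hz1 (hcent z ?_)
        intro x
        exact Subgroup.mem_centralizer_singleton_iff.mp (h ▸ Subgroup.mem_top x)
      rcases lt_or_eq_of_le hle with hlt | heq
      · exact absurd (hco.2 _ hlt) hne'
      · exact heq.symm
    by_cases hnormal : ∀ g : G, MulAut.conj g • H = H
    · -- normal case
      haveI := Fact.mk hp
      obtain ⟨P⟩ := (inferInstance : Nonempty (Sylow p G))
      have hinv : ∀ x ∈ (P : Subgroup G), ∀ k ∈ K, x * k * x⁻¹ ∈ K := by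
        intro x _ k hk
        refine Subgroup.mem_centralizer_iff.mpr ?_
        intro h hh
        have hh0 : h ∈ MulAut.conj x • H := (hnormal x).symm ▸ hh
        have hh' : x⁻¹ * h * x ∈ H := mem_smul_conj.mp hh0
        have e := Subgroup.mem_centralizer_iff.mp hk _ hh'
        have h2 : h * (x * k * x⁻¹) = x * ((x⁻¹ * h * x) * k) * x⁻¹ := by group
        rw [h2, e]
        group
      have hpK : p ∣ Nat.card K := hindex ▸ hpd
      obtain ⟨b, hbK, hb1, hbcomm⟩ := fixed_pt (P : Subgroup G) K P.isPGroup' hinv hpK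
      have hPH : (P : Subgroup G) ≤ H := by
        rw [← hCz b hbK hb1]
        intro x hx
        exact Subgroup.mem_centralizer_singleton_iff.mpr (hbcomm x hx)
      have h1 : p * Nat.card ↥(P : Subgroup G) ∣ H.index * Nat.card H :=
        mul_dvd_mul hpd (Subgroup.card_dvd_of_le hPH)
      rw [Subgroup.index_mul_card, P.card_eq_multiplicity, ← pow_succ'] at h1
      have h2 := (Nat.Prime.pow_dvd_iff_le_factorization hp
        (Nat.card_pos.ne' : Nat.card G ≠ 0)).mp h1
      omega
    · -- non-normal case
      push_neg at hnormal
      obtain ⟨g, hgne⟩ := hnormal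
      have hgH : g ∉ H := fun hg => hgne (conj_smul_eq_of_mem hg)
      set Hg := MulAut.conj g • H with hHg
      set Kg := MulAut.conj g • K with hKg
      have hcentHg : Subgroup.centralizer (Hg : Set G) = Kg := by
        rw [hHg, Subgroup.coe_pointwise_smul, centralizer_smul_set, hKg, hK]
      have hHgCD : Hg ∈ CD G := mem_CD_smul _ hH
      have hcardHg : Nat.card Hg = Nat.card H := card_smul _ _
      have hidxHg : Hg.index = H.index := by
        have e1 : Nat.card Hg * Hg.index = Nat.card H * H.index := by
          rw [Subgroup.card_mul_index, Subgroup.card_mul_index]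
        rw [hcardHg] at e1
        exact Nat.eq_of_mul_eq_mul_left Nat.card_pos e1
      have hKKg : K ⊓ Kg = ⊥ := by
        rw [eq_bot_iff]
        intro z hz
        rw [Subgroup.mem_bot]
        by_contra hz1
        have h1 : Subgroup.centralizer {z} = H := hCz z hz.1 hz1
        have h2 : Subgroup.centralizer {z} = Hg := by
          have hz2 : z ∈ Kg := hz.2
          rw [hKg, Subgroup.mem_pointwise_smul_iff_inv_smul_mem] at hz2
          set w := (MulAut.conj g)⁻¹ • z with hw
          have hzw : z = MulAut.conj g • w := by rw [hw, smul_inv_smul]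
          have hw1 : w ≠ 1 := by
            intro h
            apply hz1
            rw [hzw, h, MulAut.smul_def, map_one]
          have h3 := hCz w hz2 hw1
          have h4 : ({z} : Set G) = MulAut.conj g • ({w} : Set G) := by
            rw [Set.smul_set_singleton, ← hzw]
          rw [h4, centralizer_smul_set, h3]
        exact hgne (h2.symm.trans h1)
      set D := H ⊓ Hg with hD
      have hDCD : D ∈ CD G := inf_mem hbot hH hHgCD
      have hcentD : K ⊔ Kg ≤ Subgroup.centralizer (D : Set G) := by
        refine sup_le ?_ ?_
        · rw [hK]
          exact Subgroup.centralizer_le (SetLike.coe_subset_coe.mpr inf_le_left)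
        · rw [← hcentHg]
          exact Subgroup.centralizer_le (SetLike.coe_subset_coe.mpr inf_le_right)
      set n := H.index with hn
      have hcardKg : Nat.card Kg = n := by rw [hKg, card_smul, ← hindex]
      have hcardK : Nat.card K = n := hindex.symm
      have hsupcard : n * n ≤ Nat.card ↥(K ⊔ Kg) := by
        have h := card_mul_card_le K Kg
        rwa [hKKg, Subgroup.card_bot, mul_one, hcardK, hcardKg] at h
      have hDprod : Nat.card D * Nat.card (Subgroup.centralizer (D : Set G)) = Nat.card G :=
        cent_card hbot hDCD
      have hGeq : Nat.card G = n * Nat.card H := (Subgroup.index_mul_card H).symm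
      have hnpos : 0 < n := Nat.pos_of_ne_zero hidx0
      have hDbound : Nat.card D * n ≤ Nat.card H := by
        have h5 : Nat.card D * (n * n) ≤ Nat.card G := by
          calc Nat.card D * (n * n)
              ≤ Nat.card D * Nat.card ↥(K ⊔ Kg) := Nat.mul_le_mul_left _ hsupcard
            _ ≤ Nat.card D * Nat.card (Subgroup.centralizer (D : Set G)) :=
                Nat.mul_le_mul_left _ (Subgroup.card_le_of_le hcentD)
            _ = Nat.card G := hDprod
        rw [hGeq] at h5
        have h6 : (Nat.card D * n) * n ≤ Nat.card H * n := by
          calc (Nat.card D * n) * n = Nat.card D * (n * n) := by ring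
            _ ≤ n * Nat.card H := h5
            _ = Nat.card H * n := by ring
        exact Nat.le_of_mul_le_mul_right h6 hnpos
      have hrel : Nat.card D * Hg.relIndex H = Nat.card H := by
        have h := Subgroup.card_mul_index (Hg.subgroupOf H)
        rwa [show Nat.card ↥(Hg.subgroupOf H) = Nat.card D by
          rw [hD, ← Subgroup.inf_subgroupOf_left]
          exact Nat.card_congr (Subgroup.subgroupOfEquivOfLe inf_le_left).toEquiv] at h
      have hDpos : 0 < Nat.card D := Nat.card_pos
      have hrge : n ≤ Hg.relIndex H := by
        have h : Nat.card D * n ≤ Nat.card D * Hg.relIndex H := by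
          rw [hrel]; exact hDbound
        exact Nat.le_of_mul_le_mul_left h hDpos
      have hrle : Hg.relIndex H ≤ n := by
        have h1 : Hg.relIndex H ≤ Hg.relIndex ⊤ :=
          Subgroup.relIndex_le_of_le_right le_top
            (by rw [Subgroup.relIndex_top_right, hidxHg]; exact hidx0)
        rwa [Subgroup.relIndex_top_right, hidxHg] at h1
      have hreq : Hg.relIndex H = n := le_antisymm hrle hrge
      have hcard1 : Nat.card (↥H ⧸ Hg.subgroupOf H) = n := by
        rw [← Subgroup.index_eq_card]; exact hreq
      have hcard2 : Nat.card (↥(⊤ : Subgroup G) ⧸ Hg.subgroupOf ⊤) = n := by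
        rw [← Subgroup.index_eq_card]
        show Hg.relIndex ⊤ = n
        rw [Subgroup.relIndex_top_right, hidxHg]
      set e := Subgroup.quotientSubgroupOfEmbeddingOfLE Hg (le_top : H ≤ ⊤) with he
      have hbij : Function.Bijective e :=
        (Nat.bijective_iff_injective_and_card e).mpr ⟨e.injective, by rw [hcard1, hcard2]⟩
      obtain ⟨ybar, hy⟩ := hbij.2 (QuotientGroup.mk (⟨g⁻¹, Subgroup.mem_top _⟩ : ↥(⊤ : Subgroup G)))
      obtain ⟨yh, rfl⟩ := QuotientGroup.mk_surjective ybar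
      rw [he, Subgroup.quotientSubgroupOfEmbeddingOfLE_apply_mk, QuotientGroup.eq,
        Subgroup.mem_subgroupOf] at hy
      have hy2 : (yh : G)⁻¹ * g⁻¹ ∈ Hg := by
        simpa using hy
      rw [hHg, mem_smul_conj] at hy2
      have h7 : g⁻¹ * ((yh : G)⁻¹ * g⁻¹) * g = g⁻¹ * (yh : G)⁻¹ := by group
      rw [h7] at hy2
      have h8 : g⁻¹ ∈ H := by
        have h9 : g⁻¹ = (g⁻¹ * (yh : G)⁻¹) * (yh : G) := by group
        rw [h9]
        exact H.mul_mem hy2 yh.2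
      exact hgH (by simpa using H.inv_mem h8)
  · -- case (i) : ¬ C(H) ≤ H
    obtain ⟨x, hxK, hxH⟩ := SetLike.not_le_iff_exists.mp hKH
    have hxpow : ∀ (m : ℤ), ∀ h ∈ H, h * x ^ m = x ^ m * h := by
      intro m h hh
      exact Subgroup.mem_centralizer_iff.mp (Subgroup.zpow_mem K hxK m) h hh
    have hlt : H < H ⊔ Subgroup.zpowers x := lt_of_le_of_ne le_sup_left (by
      intro h
      apply hxH
      rw [h]
      exact (le_sup_right : Subgroup.zpowers x ≤ _) (Subgroup.mem_zpowers x))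
    have hsup : H ⊔ Subgroup.zpowers x = ⊤ := hco.2 _ hlt
    have hST : ∀ y : G, ∃ h ∈ H, ∃ m : ℤ, y = h * x ^ m := by
      intro y
      let S : Subgroup G :=
        { carrier := {y | ∃ h ∈ H, ∃ m : ℤ, y = h * x ^ m}
          one_mem' := ⟨1, H.one_mem, 0, by simp⟩
          mul_mem' := by
            rintro a b ⟨h₁, hh₁, m₁, rfl⟩ ⟨h₂, hh₂, m₂, rfl⟩
            refine ⟨h₁ * h₂, H.mul_mem hh₁ hh₂, m₁ + m₂, ?_⟩
            have hcomm := hxpow m₁ h₂ hh₂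
            calc h₁ * x ^ m₁ * (h₂ * x ^ m₂)
                = h₁ * (x ^ m₁ * h₂) * x ^ m₂ := by simp [mul_assoc]
              _ = h₁ * (h₂ * x ^ m₁) * x ^ m₂ := by rw [← hcomm]
              _ = h₁ * h₂ * x ^ (m₁ + m₂) := by rw [zpow_add]; simp [mul_assoc]
          inv_mem' := by
            rintro a ⟨h, hh, m, rfl⟩
            refine ⟨h⁻¹, H.inv_mem hh, -m, ?_⟩
            have hcomm := hxpow (-m) h⁻¹ (H.inv_mem hh)
            rw [mul_inv_rev, ← zpow_neg, ← hcomm] }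
      have hsub : H ⊔ Subgroup.zpowers x ≤ S := by
        refine sup_le (fun a ha => ⟨a, ha, 0, by simp⟩) ?_
        rintro a ha
        obtain ⟨m, rfl⟩ := Subgroup.mem_zpowers_iff.mp ha
        exact ⟨1, H.one_mem, m, by simp⟩
      exact hsub (hsup ▸ Subgroup.mem_top y)
    have hHKbot : ∀ z, z ∈ H → z ∈ K → z = 1 := by
      intro z hzH hzK
      refine hcent z ?_
      intro w
      obtain ⟨h, hh, m, rfl⟩ := hST w
      have e1 : h * z = z * h := Subgroup.mem_centralizer_iff.mp hzK h hh
      have e2 : z * x ^ m = x ^ m * z :=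
        Subgroup.mem_centralizer_iff.mp (Subgroup.zpow_mem K hxK m) z hzH
      calc h * x ^ m * z = h * (x ^ m * z) := by rw [mul_assoc]
        _ = h * (z * x ^ m) := by rw [← e2]
        _ = (h * z) * x ^ m := by rw [mul_assoc]
        _ = (z * h) * x ^ m := by rw [e1]
        _ = z * (h * x ^ m) := by rw [mul_assoc]
    have hKz : ∀ y ∈ K, y ∈ Subgroup.zpowers x := by
      intro y hy
      obtain ⟨h, hh, m, hw⟩ := hST y
      have hxnK : x ^ m ∈ K := Subgroup.zpow_mem K hxK m
      have hhK : h ∈ K := by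
        have h1 : h = y * (x ^ m)⁻¹ := by rw [hw]; group
        rw [h1]
        exact K.mul_mem hy (K.inv_mem hxnK)
      have h1 : h = 1 := hHKbot h hh hhK
      rw [hw, h1, one_mul]
      exact Subgroup.zpow_mem _ (Subgroup.mem_zpowers x) m
    have hKtriv : K = ⊥ := by
      rw [eq_bot_iff]
      intro z hz
      rw [Subgroup.mem_bot]
      obtain ⟨m, hm⟩ := Subgroup.mem_zpowers_iff.mp (hKz z hz)
      refine hcent z ?_
      intro w
      obtain ⟨h, hh, mm, rfl⟩ := hST w
      have e1 : h * z = z * h := Subgroup.mem_centralizer_iff.mp hz h hh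
      have e2 : x ^ mm * z = z * x ^ mm := by
        rw [← hm, ← zpow_add, ← zpow_add, add_comm]
      calc h * x ^ mm * z = h * (x ^ mm * z) := by rw [mul_assoc]
        _ = h * (z * x ^ mm) := by rw [e2]
        _ = (h * z) * x ^ mm := by rw [mul_assoc]
        _ = (z * h) * x ^ mm := by rw [e1]
        _ = z * (h * x ^ mm) := by rw [mul_assoc]
    exact hKbot hKtriv
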